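/- Let F be a graph with n vertices and m edges such that every vertex two-coloring of F has at least (1 − α)m monochromatic edges. Then for every t ≥ 1, every vertex two-coloring of the t-blowup F[t] has at least (1 − α)·m·t² monochromatic edges. -/

import Mathlib

/-- The `t`-blowup of a graph `F`: each vertex is replaced by an independent set of
size `t`, and each edge by a complete bipartite graph. -/
def SimpleGraph.blowup {V : Type*} (F : SimpleGraph V) (t : ℕ) :
    SimpleGraph (V × Fin t) where
  Adj x y := F.Adj x.1 y.1
  symm := ⟨fun _ _ h => F.adj_symm h⟩
  loopless := ⟨fun x h => F.irrefl h⟩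

open Finset

section Aux

variable {W : Type*}

/-- The subgraph of monochromatic edges. -/
private def monoSub (G : SimpleGraph W) (χ : W → Bool) : SimpleGraph W where
  Adj u v := G.Adj u v ∧ χ u = χ v
  symm := ⟨fun _ _ ⟨h, hc⟩ => ⟨h.symm, hc.symm⟩⟩
  loopless := ⟨fun u ⟨h, _⟩ => G.irrefl h⟩

private lemma monoSub_edgeSet (G : SimpleGraph W) (χ : W → Bool) :
    {e : Sym2 W | e ∈ G.edgeSet ∧ ∃ c, ∀ x ∈ e, χ x = c} = (monoSub G χ).edgeSet := by
  ext e
  induction e using Sym2.ind with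
  | _ u v =>
    simp only [Set.mem_setOf_eq, SimpleGraph.mem_edgeSet, Sym2.mem_iff, monoSub]
    constructor
    · rintro ⟨h, c, hc⟩
      exact ⟨h, (hc u (Or.inl rfl)).trans (hc v (Or.inr rfl)).symm⟩
    · rintro ⟨h, hc⟩
      exact ⟨h, χ v, fun x hx => by rcases hx with rfl | rfl <;> simp [hc]⟩

private lemma dart_card' (G : SimpleGraph W) [Fintype W] [DecidableRel G.Adj] :
    Fintype.card G.Dart = #(univ.filter fun p : W × W => G.Adj p.1 p.2) := by
  rw [← Fintype.card_subtype]
  exact Fintype.card_congr ⟨fun d => ⟨d.toProd, d.adj⟩, fun p => ⟨p.1, p.2⟩,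
    fun d => by cases d; rfl, fun p => by rfl⟩

private lemma two_mul_mono (G : SimpleGraph W) [Fintype W] [DecidableEq W] [DecidableRel G.Adj]
    (χ : W → Bool) :
    #(univ.filter fun p : W × W => G.Adj p.1 p.2 ∧ χ p.1 = χ p.2)
      = 2 * Nat.card {e : Sym2 W // e ∈ G.edgeSet ∧ ∃ c, ∀ x ∈ e, χ x = c} := by
  classical
  have h1 : Nat.card {e : Sym2 W // e ∈ G.edgeSet ∧ ∃ c, ∀ x ∈ e, χ x = c}
      = (monoSub G χ).edgeFinset.card := by
    have := monoSub_edgeSet G χ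
    rw [show {e : Sym2 W // e ∈ G.edgeSet ∧ ∃ c, ∀ x ∈ e, χ x = c}
        = ↥{e : Sym2 W | e ∈ G.edgeSet ∧ ∃ c, ∀ x ∈ e, χ x = c} from rfl,
      Nat.card_coe_set_eq, this, Set.ncard_eq_toFinset_card']
    exact congrArg Finset.card (by ext; simp)
  have h2 : #(univ.filter fun p : W × W => G.Adj p.1 p.2 ∧ χ p.1 = χ p.2)
      = Fintype.card (monoSub G χ).Dart := by
    rw [dart_card']
    exact Finset.card_bij (fun p _ => p)
      (fun p hp => Finset.mem_filter.mpr ⟨mem_univ _, (Finset.mem_filter.mp hp).2⟩) (by simp)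
      (fun p hp => ⟨p, Finset.mem_filter.mpr ⟨mem_univ _, (Finset.mem_filter.mp hp).2⟩, rfl⟩)
  rw [h1, h2, SimpleGraph.dart_card_eq_twice_card_edges]

variable {V : Type*} [Fintype V] [DecidableEq V]

private lemma fiber_card {t : ℕ} {u v : V} (huv : u ≠ v)
    (P : Fin t → Fin t → Prop) [∀ i j, Decidable (P i j)] :
    #(univ.filter fun f : V → Fin t => P (f u) (f v))
      = #(univ.filter fun p : Fin t × Fin t => P p.1 p.2) * t ^ (Fintype.card V - 2) := by
  classical
  rw [← Fintype.card_subtype, ← Fintype.card_subtype]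
  have e : {f : V → Fin t // P (f u) (f v)}
      ≃ {p : Fin t × Fin t // P p.1 p.2} × ({x : V // x ≠ u ∧ x ≠ v} → Fin t) :=
    { toFun := fun f => (⟨(f.1 u, f.1 v), f.2⟩, fun x => f.1 x.1)
      invFun := fun pg =>
        ⟨fun x => if h : x = u then pg.1.1.1 else if h' : x = v then pg.1.1.2
            else pg.2 ⟨x, h, h'⟩, by
          simp only [dif_pos rfl, dif_neg (Ne.symm huv)]
          exact pg.1.2⟩
      left_inv := fun f => by
        ext x
        by_cases h : x = u
        · subst h; simp
        · by_cases h' : x = v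
          · subst h'; simp [h]
          · simp [h, h']
      right_inv := fun pg => by
        refine Prod.ext (Subtype.ext (Prod.ext ?_ ?_)) (funext fun x => ?_)
        · simp
        · simp [Ne.symm huv]
        · simp [x.2.1, x.2.2] }
  rw [Fintype.card_congr e, Fintype.card_prod, Fintype.card_fun, Fintype.card_fin]
  congr 1
  rw [Fintype.card_subtype]
  have h3 : (univ.filter fun x : V => x ≠ u ∧ x ≠ v) = univ \ {u, v} := by
    ext x; simp [not_or]
  rw [h3, card_sdiff_of_subset (subset_univ _), card_univ]
  congr 1
  rw [card_insert_of_notMem (by simp [huv]), card_singleton]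

private lemma blowup_decomp (F : SimpleGraph V) [DecidableRel F.Adj] (t : ℕ)
    (χ : V × Fin t → Bool) :
    #(univ.filter fun q : (V × Fin t) × (V × Fin t) => F.Adj q.1.1 q.2.1 ∧ χ q.1 = χ q.2)
      = ∑ p ∈ univ.filter (fun p : V × V => F.Adj p.1 p.2),
          #(univ.filter fun ij : Fin t × Fin t => χ (p.1, ij.1) = χ (p.2, ij.2)) := by
  classical
  rw [card_eq_sum_card_fiberwise (f := fun q : (V × Fin t) × (V × Fin t) => (q.1.1, q.2.1))
    (t := univ.filter fun p : V × V => F.Adj p.1 p.2)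
    (fun q hq => by simp only [mem_coe, mem_filter, mem_univ, true_and] at hq ⊢; exact hq.1)]
  refine Finset.sum_congr rfl fun p hp => ?_
  simp only [mem_filter, mem_univ, true_and] at hp
  refine card_nbij' (fun q => (q.1.2, q.2.2)) (fun ij => ((p.1, ij.1), (p.2, ij.2)))
    ?_ ?_ ?_ ?_
  · rintro ⟨⟨a, i⟩, ⟨b, j⟩⟩ hq
    simp only [mem_coe, mem_filter, mem_univ, true_and, Prod.mk.injEq] at hq ⊢
    obtain ⟨⟨_, hχ⟩, rfl, rfl⟩ := hq
    exact hχ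
  · rintro ⟨i, j⟩ hij
    simp only [mem_coe, mem_filter, mem_univ, true_and] at hij
    simp [hp, hij]
  · rintro ⟨⟨a, i⟩, ⟨b, j⟩⟩ hq
    simp only [mem_coe, mem_filter, mem_univ, true_and, Prod.mk.injEq] at hq
    obtain ⟨-, rfl, rfl⟩ := hq
    rfl
  · rintro ⟨i, j⟩ -; rfl

private lemma sum_over_proj (F : SimpleGraph V) [DecidableRel F.Adj] (t : ℕ)
    (χ : V × Fin t → Bool) :
    ∑ f : V → Fin t,
        #(univ.filter fun p : V × V => F.Adj p.1 p.2 ∧ χ (p.1, f p.1) = χ (p.2, f p.2))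
      = (∑ p ∈ univ.filter (fun p : V × V => F.Adj p.1 p.2),
          #(univ.filter fun ij : Fin t × Fin t => χ (p.1, ij.1) = χ (p.2, ij.2)))
          * t ^ (Fintype.card V - 2) := by
  classical
  have key : ∀ f : V → Fin t,
      #(univ.filter fun p : V × V => F.Adj p.1 p.2 ∧ χ (p.1, f p.1) = χ (p.2, f p.2))
        = ∑ p ∈ univ.filter (fun p : V × V => F.Adj p.1 p.2),
            (if χ (p.1, f p.1) = χ (p.2, f p.2) then 1 else 0) := by
    intro f
    rw [← Finset.filter_filter, Finset.card_filter]
  simp only [key]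
  rw [Finset.sum_comm, Finset.sum_mul]
  refine Finset.sum_congr rfl fun p hp => ?_
  simp only [mem_filter, mem_univ, true_and] at hp
  rw [← Finset.card_filter]
  exact fiber_card (F.ne_of_adj hp) (fun i j => χ (p.1, i) = χ (p.2, j))

end Aux

theorem stmt_5 {V : Type*} [Fintype V] (F : SimpleGraph V) (α : ℚ)
    (h : ∀ χ : V → Bool,
      (Nat.card {e : Sym2 V // e ∈ F.edgeSet ∧ ∃ c, ∀ x ∈ e, χ x = c} : ℚ)
        ≥ (1 - α) * Nat.card F.edgeSet) :
    ∀ t : ℕ, 1 ≤ t → ∀ χ : V × Fin t → Bool,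
      (Nat.card {e : Sym2 (V × Fin t) // e ∈ (F.blowup t).edgeSet ∧ ∃ c, ∀ x ∈ e, χ x = c} : ℚ)
        ≥ (1 - α) * Nat.card F.edgeSet * t ^ 2 := by
  intro t ht χ
  classical
  by_cases hadj : ∃ u v, F.Adj u v
  · obtain ⟨u, v, huv⟩ := hadj
    have hn2 : 2 ≤ Fintype.card V :=
      Fintype.one_lt_card_iff.mpr ⟨u, v, F.ne_of_adj huv⟩
    set n := Fintype.card V with hn
    -- blowup pair count
    have e1 := blowup_decomp F t χ
    have e2 := sum_over_proj F t χ
    -- relate blowup pair count to the monochromatic edge count of the blowup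
    have hbl := two_mul_mono (F.blowup t) χ
    have hfilter : (univ.filter fun q : (V × Fin t) × (V × Fin t) =>
          (F.blowup t).Adj q.1 q.2 ∧ χ q.1 = χ q.2)
        = (univ.filter fun q : (V × Fin t) × (V × Fin t) =>
          F.Adj q.1.1 q.2.1 ∧ χ q.1 = χ q.2) :=
      Finset.filter_congr (fun x _ => Iff.rfl)
    rw [hfilter, e1] at hbl
    -- per-projection bound
    have hDf : ∀ f : V → Fin t,
        (2 : ℚ) * ((1 - α) * Nat.card F.edgeSet)
          ≤ (#(univ.filter fun p : V × V =>
              F.Adj p.1 p.2 ∧ χ (p.1, f p.1) = χ (p.2, f p.2)) : ℚ) := by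
      intro f
      have h1 := two_mul_mono F (fun x => χ (x, f x))
      have h2 := h (fun x => χ (x, f x))
      rw [h1]
      push_cast
      linarith
    -- sum the bound over all projections
    have hsum : ((t : ℚ) ^ n) * (2 * ((1 - α) * Nat.card F.edgeSet))
        ≤ ((∑ f : V → Fin t, #(univ.filter fun p : V × V =>
            F.Adj p.1 p.2 ∧ χ (p.1, f p.1) = χ (p.2, f p.2)) : ℕ) : ℚ) := by
      push_cast
      calc ((t : ℚ) ^ n) * (2 * ((1 - α) * Nat.card F.edgeSet))
          = ∑ _f : V → Fin t, (2 : ℚ) * ((1 - α) * Nat.card F.edgeSet) := by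
            rw [Finset.sum_const, card_univ, Fintype.card_fun, Fintype.card_fin]
            push_cast
            ring
        _ ≤ _ := Finset.sum_le_sum (fun f _ => hDf f)
    rw [e2] at hsum
    -- abbreviations
    set S : ℕ := ∑ p ∈ univ.filter (fun p : V × V => F.Adj p.1 p.2),
        #(univ.filter fun ij : Fin t × Fin t => χ (p.1, ij.1) = χ (p.2, ij.2)) with hS
    set Mb : ℕ := Nat.card {e : Sym2 (V × Fin t) //
        e ∈ (F.blowup t).edgeSet ∧ ∃ c, ∀ x ∈ e, χ x = c} with hMb
    have hS2 : (S : ℚ) = 2 * Mb := by exact_mod_cast hbl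
    have htpow : (0 : ℚ) < (t : ℚ) ^ (n - 2) := by positivity
    have hnn : n = 2 + (n - 2) := (Nat.add_sub_cancel' hn2).symm
    have hpowsplit : ((t : ℚ)) ^ n = (t : ℚ) ^ 2 * (t : ℚ) ^ (n - 2) := by
      conv_lhs => rw [hnn]
      rw [pow_add]
    have hsum' : ((t : ℚ) ^ n) * (2 * ((1 - α) * Nat.card F.edgeSet))
        ≤ (S : ℚ) * (t : ℚ) ^ (n - 2) := by
      calc ((t : ℚ) ^ n) * (2 * ((1 - α) * Nat.card F.edgeSet)) ≤ _ := hsum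
        _ = (S : ℚ) * (t : ℚ) ^ (n - 2) := by push_cast; ring
    rw [hpowsplit, hS2] at hsum'
    have hfinal : (t : ℚ) ^ 2 * (2 * ((1 - α) * Nat.card F.edgeSet))
        ≤ 2 * (Mb : ℚ) := by
      have := (mul_le_mul_iff_left₀ htpow).mp (by linarith : ((t : ℚ) ^ 2 *
        (2 * ((1 - α) * Nat.card F.edgeSet))) * (t : ℚ) ^ (n - 2)
          ≤ (2 * (Mb : ℚ)) * (t : ℚ) ^ (n - 2))
      linarith
    rw [ge_iff_le]
    nlinarith [hfinal]
  · -- no edges: both sides are trivial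
    have hE : F.edgeSet = ∅ := by
      ext e
      induction e using Sym2.ind with
      | _ u v =>
        simp only [SimpleGraph.mem_edgeSet, Set.mem_empty_iff_false, iff_false]
        exact fun hc => hadj ⟨u, v, hc⟩
    have hcard : Nat.card F.edgeSet = 0 := by
      rw [hE]; simp
    rw [hcard]
    push_cast
    have : (Nat.card {e : Sym2 (V × Fin t) //
        e ∈ (F.blowup t).edgeSet ∧ ∃ c, ∀ x ∈ e, χ x = c} : ℚ) ≥ 0 := Nat.cast_nonneg _
    linarith
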